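/- Let (X,⊥) be a point-closed Dacey space such that C(X,⊥) has the covering property. Then (X,⊥) is a Sasaki space. -/
import Mathlib


/-- The set of elements orthogonal to every element of `A`. -/
def perpSet {X : Type*} (perp : X → X → Prop) (A : Set X) : Set X :=
  {x | ∀ a ∈ A, perp x a}

/-- A subset is orthoclosed if it equals its double orthocomplement. -/
def Orthoclosed {X : Type*} (perp : X → X → Prop) (A : Set X) : Prop :=
  perpSet perp (perpSet perp A) = A

/-- `φ` (restricted to `∁(A^⊥)`) is a Sasaki map to the orthoclosed set `A`. -/
def IsSasakiMap {X : Type*} (perp : X → X → Prop) (A : Set X) (φ : X → X) : Prop :=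
  (∀ e ∈ (perpSet perp A)ᶜ, φ e ∈ A) ∧
  (∀ e ∈ A, φ e = e) ∧
  (∀ e ∈ (perpSet perp A)ᶜ, ∀ f ∈ (perpSet perp A)ᶜ, (perp (φ e) f ↔ perp e (φ f)))

/-- A Sasaki space: every orthoclosed subset admits a Sasaki map. -/
def IsSasakiSpace {X : Type*} (perp : X → X → Prop) : Prop :=
  ∀ A : Set X, Orthoclosed perp A → ∃ φ : X → X, IsSasakiMap perp A φ

section Aux

variable {X : Type*} {perp : X → X → Prop}

lemma perpSet_anti {S T : Set X} (h : S ⊆ T) : perpSet perp T ⊆ perpSet perp S :=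
  fun _ hx a ha => hx a (h ha)

lemma subset_biperp (hsymm : ∀ x y, perp x y → perp y x) (S : Set X) :
    S ⊆ perpSet perp (perpSet perp S) :=
  fun s hs _ hy => hsymm _ _ (hy s hs)

lemma perpSet_orthoclosed (hsymm : ∀ x y, perp x y → perp y x) (S : Set X) :
    Orthoclosed perp (perpSet perp S) :=
  Set.Subset.antisymm (perpSet_anti (subset_biperp hsymm S)) (subset_biperp hsymm _)

lemma cl_mono {S T : Set X} (h : S ⊆ T) :
    perpSet perp (perpSet perp S) ⊆ perpSet perp (perpSet perp T) :=
  perpSet_anti (perpSet_anti h)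

lemma cl_subset {S T : Set X} (hT : Orthoclosed perp T) (h : S ⊆ T) :
    perpSet perp (perpSet perp S) ⊆ T := hT ▸ cl_mono h

lemma inter_orthoclosed (hsymm : ∀ x y, perp x y → perp y x) {A B : Set X}
    (hA : Orthoclosed perp A) (hB : Orthoclosed perp B) : Orthoclosed perp (A ∩ B) :=
  Set.Subset.antisymm
    (Set.subset_inter (cl_subset hA Set.inter_subset_left)
      (cl_subset hB Set.inter_subset_right))
    (subset_biperp hsymm _)

/-- The key atomicity lemma: for orthoclosed `A` and `e ∉ A^⊥`, the set
`A ∩ (A^⊥ ∨ {e})` is a singleton `{x}`, and moreover `A^⊥ ∨ {e} = A^⊥ ∨ {x}`. -/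
lemma atomic (hsymm : ∀ x y, perp x y → perp y x) (hirrefl : ∀ x, ¬ perp x x)
    (hpoint : ∀ x : X, Orthoclosed perp {x})
    (hDacey : ∀ A B : Set X, Orthoclosed perp A → Orthoclosed perp B → A ⊆ B →
      B = perpSet perp (perpSet perp (A ∪ (B ∩ perpSet perp A))))
    (hcover : ∀ A : Set X, Orthoclosed perp A → ∀ x ∉ A,
      A ⊂ perpSet perp (perpSet perp (A ∪ {x})) ∧
      ∀ B : Set X, Orthoclosed perp B → A ⊂ B →
        B ⊆ perpSet perp (perpSet perp (A ∪ {x})) →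
        B = perpSet perp (perpSet perp (A ∪ {x})))
    {A : Set X} (hA : Orthoclosed perp A) {e : X} (he : e ∉ perpSet perp A) :
    ∃ x, A ∩ perpSet perp (perpSet perp (perpSet perp A ∪ {e})) = {x} ∧
      perpSet perp (perpSet perp (perpSet perp A ∪ {e})) =
        perpSet perp (perpSet perp (perpSet perp A ∪ {x})) := by
  set Pa := perpSet perp A with hPadef
  set B := perpSet perp (perpSet perp (Pa ∪ {e})) with hBdef
  have hPa : Orthoclosed perp Pa := perpSet_orthoclosed hsymm A
  have hB : Orthoclosed perp B := perpSet_orthoclosed hsymm _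
  have hPaB : Pa ⊆ B := fun z hz => subset_biperp hsymm _ (Or.inl hz)
  have heB : e ∈ B := subset_biperp hsymm _ (Or.inr rfl)
  -- nonemptiness of A ∩ B via Dacey
  have hD := hDacey Pa B hPa hB hPaB
  rw [hPadef] at hD
  rw [hA] at hD
  have hne : ∃ x, x ∈ A ∩ B := by
    by_contra hcon
    push_neg at hcon
    have hBA : B ∩ A = ∅ := by
      ext z; simp only [Set.mem_inter_iff, Set.mem_empty_iff_false, iff_false]
      rintro ⟨hz1, hz2⟩; exact hcon z ⟨hz2, hz1⟩
    rw [hBA, Set.union_empty] at hD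
    rw [hPa] at hD
    exact he (hD ▸ heB)
  obtain ⟨x, hxA, hxB⟩ := hne
  have hxPa : x ∉ Pa := fun h => hirrefl x (h x hxA)
  obtain ⟨hc1, hc2⟩ := hcover Pa hPa e he
  -- D = cl (Pa ∪ {x}) equals B
  set D := perpSet perp (perpSet perp (Pa ∪ {x})) with hDdef
  have hDortho : Orthoclosed perp D := perpSet_orthoclosed hsymm _
  have hxD : x ∈ D := subset_biperp hsymm _ (Or.inr rfl)
  have hPaD : Pa ⊆ D := fun z hz => subset_biperp hsymm _ (Or.inl hz)
  have hDB : D ⊆ B :=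
    cl_subset hB (Set.union_subset hPaB (Set.singleton_subset_iff.mpr hxB))
  have hDeqB : D = B := hc2 D hDortho
    (hPaD.ssubset_of_ne (fun h => hxPa (h ▸ hxD))) hDB
  -- E = B ∩ {x}^⊥ equals Pa
  set E := B ∩ perpSet perp {x} with hEdef
  have hEortho : Orthoclosed perp E :=
    inter_orthoclosed hsymm hB (perpSet_orthoclosed hsymm _)
  have hPaE : Pa ⊆ E := fun z hz =>
    ⟨hPaB hz, fun a ha => by rw [Set.mem_singleton_iff] at ha; exact ha ▸ hz x hxA⟩
  have hxE : x ∉ E := fun h => hirrefl x (h.2 x rfl)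
  have hEPa : E = Pa := by
    by_contra hneq
    have : E = B := hc2 E hEortho (hPaE.ssubset_of_ne (Ne.symm hneq)) Set.inter_subset_left
    exact hxE (this ▸ hxB)
  -- Dacey for {x} ⊆ A ∩ B shows A ∩ B = {x}
  have hC : Orthoclosed perp (A ∩ B) := inter_orthoclosed hsymm hA hB
  have hxC : ({x} : Set X) ⊆ A ∩ B := Set.singleton_subset_iff.mpr ⟨hxA, hxB⟩
  have hD2 := hDacey {x} (A ∩ B) (hpoint x) hC hxC
  have hempty : (A ∩ B) ∩ perpSet perp {x} = ∅ := by
    ext z; simp only [Set.mem_inter_iff, Set.mem_empty_iff_false, iff_false]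
    rintro ⟨⟨hz1, hz2⟩, hz3⟩
    have : z ∈ E := ⟨hz2, hz3⟩
    rw [hEPa] at this
    exact hirrefl z (this z hz1)
  rw [hempty, Set.union_empty, hpoint x] at hD2
  exact ⟨x, hD2, hDeqB.symm⟩

end Aux

/-- a point-closed Dacey space whose lattice of orthoclosed
subsets has the covering property is a Sasaki space. -/
theorem dacey_covering_implies_sasaki {X : Type*} (perp : X → X → Prop)
    (hsymm : ∀ x y, perp x y → perp y x) (hirrefl : ∀ x, ¬ perp x x)
    (hpoint : ∀ x : X, Orthoclosed perp {x})
    (hDacey : ∀ A B : Set X, Orthoclosed perp A → Orthoclosed perp B → A ⊆ B →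
      B = perpSet perp (perpSet perp (A ∪ (B ∩ perpSet perp A))))
    (hcover : ∀ A : Set X, Orthoclosed perp A → ∀ x ∉ A,
      A ⊂ perpSet perp (perpSet perp (A ∪ {x})) ∧
      ∀ B : Set X, Orthoclosed perp B → A ⊂ B →
        B ⊆ perpSet perp (perpSet perp (A ∪ {x})) →
        B = perpSet perp (perpSet perp (A ∪ {x}))) :
    IsSasakiSpace perp := by
  intro A hA
  classical
  set φ : X → X := fun e =>
    if h : e ∈ perpSet perp A then e
    else Classical.choose (atomic hsymm hirrefl hpoint hDacey hcover hA h) with hφdef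
  have spec : ∀ e (he : e ∉ perpSet perp A),
      A ∩ perpSet perp (perpSet perp (perpSet perp A ∪ {e})) = {φ e} ∧
      perpSet perp (perpSet perp (perpSet perp A ∪ {e})) =
        perpSet perp (perpSet perp (perpSet perp A ∪ {φ e})) := by
    intro e he
    have := Classical.choose_spec (atomic hsymm hirrefl hpoint hDacey hcover hA he)
    simpa [hφdef, dif_neg he] using this
  have hmem : ∀ e, e ∉ perpSet perp A → φ e ∈ A := by
    intro e he
    have h := (spec e he).1
    have : φ e ∈ A ∩ perpSet perp (perpSet perp (perpSet perp A ∪ {e})) := by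
      rw [h]; exact rfl
    exact this.1
  have hadj : ∀ e, e ∉ perpSet perp A → ∀ f, f ∉ perpSet perp A →
      perp (φ e) f → perp e (φ f) := by
    intro e he f hf hpf
    have hx := spec e he
    have hy := spec f hf
    have hxA : φ e ∈ A := hmem e he
    have hyA : φ f ∈ A := hmem f hf
    have hyB : φ f ∈ perpSet perp (perpSet perp (perpSet perp A ∪ {f})) := by
      have : φ f ∈ A ∩ perpSet perp (perpSet perp (perpSet perp A ∪ {f})) := by
        rw [hy.1]; exact rfl
      exact this.2
    -- e lies in cl(A^⊥ ∪ {φ e})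
    have heB : e ∈ perpSet perp (perpSet perp (perpSet perp A ∪ {φ e})) := by
      rw [← hx.2]
      exact subset_biperp hsymm _ (Or.inr rfl)
    -- cl(A^⊥ ∪ {φ e}) ⊆ {φ f}^⊥
    have hsub : perpSet perp (perpSet perp (perpSet perp A ∪ {φ e})) ⊆
        perpSet perp {φ f} := by
      apply cl_subset (perpSet_orthoclosed hsymm _)
      rintro z (hz | hz)
      · -- z ∈ A^⊥ : z ⊥ φ f since φ f ∈ A
        intro a ha
        rw [Set.mem_singleton_iff] at ha
        exact ha ▸ hz (φ f) hyA
      · -- z = φ e : φ e ⊥ φ f since φ f ∈ cl(A^⊥ ∪ {f}) and φ e ∈ (A^⊥ ∪ {f})^⊥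
        rw [Set.mem_singleton_iff] at hz
        subst hz
        intro a ha
        rw [Set.mem_singleton_iff] at ha
        subst ha
        have hzperp : φ e ∈ perpSet perp (perpSet perp A ∪ {f}) := by
          rintro b (hb | hb)
          · exact hsymm _ _ (hb (φ e) hxA)
          · rw [Set.mem_singleton_iff] at hb; exact hb ▸ hpf
        exact hsymm _ _ (hyB (φ e) hzperp)
    exact hsub heB (φ f) rfl
  refine ⟨φ, fun e he => hmem e he, ?_, ?_⟩
  · -- φ fixes A
    intro e heA
    have he : e ∉ perpSet perp A := fun h => hirrefl e (h e heA)
    have h := (spec e he).1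
    have heB : e ∈ perpSet perp (perpSet perp (perpSet perp A ∪ {e})) :=
      subset_biperp hsymm _ (Or.inr rfl)
    have : e ∈ ({φ e} : Set X) := h ▸ (⟨heA, heB⟩ : e ∈ A ∩ _)
    exact (Set.mem_singleton_iff.mp this).symm
  · intro e he f hf
    rw [Set.mem_compl_iff] at he hf
    constructor
    · exact hadj e he f hf
    · intro h
      exact hsymm _ _ (hadj f hf e he (hsymm _ _ h))
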